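/- In a catalytic flow system, every semi-organization is an organization; that is, every closed and self-maintaining set of molecules is mass-maintaining. -/
import Mathlib


/-- A set `C` is closed: products of reactions whose reactants all lie in `C` lie in `C`. -/
def Closed {ι ρ : Type*} (re : ρ → Multiset ι × Multiset ι) (C : Set ι) : Prop :=
  ∀ r : ρ, (∀ a ∈ (re r).1, a ∈ C) → ∀ b ∈ (re r).2, b ∈ C

/-- Molecule `k` is produced within `C`. -/
def Produced {ι ρ : Type*} [DecidableEq ι] (re : ρ → Multiset ι × Multiset ι)
    (C : Set ι) (k : ι) : Prop :=
  ∃ r : ρ, (∀ a ∈ (re r).1, a ∈ C) ∧ (re r).1.count k < (re r).2.count k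

/-- Molecule `k` is used-up within `C`. -/
def UsedUp {ι ρ : Type*} [DecidableEq ι] (re : ρ → Multiset ι × Multiset ι)
    (C : Set ι) (k : ι) : Prop :=
  ∃ r : ρ, (∀ a ∈ (re r).1, a ∈ C) ∧ (re r).2.count k < (re r).1.count k

/-- `S` is self-maintaining. -/
def SelfMaintaining {ι ρ : Type*} [DecidableEq ι] (re : ρ → Multiset ι × Multiset ι)
    (S : Set ι) : Prop :=
  ∀ k ∈ S, UsedUp re S k → Produced re S k

/-- A semi-organization is closed and self-maintaining. -/
def SemiOrganization {ι ρ : Type*} [DecidableEq ι] (re : ρ → Multiset ι × Multiset ι)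
    (S : Set ι) : Prop :=
  Closed re S ∧ SelfMaintaining re S

/-- Entry of the stoichiometric matrix: products minus reactants multiplicity. -/
noncomputable def stoich {ι ρ : Type*} [DecidableEq ι] (re : ρ → Multiset ι × Multiset ι)
    (i : ι) (r : ρ) : ℝ :=
  ((re r).2.count i : ℝ) - ((re r).1.count i : ℝ)

/-- `C` is mass-maintaining. -/
def MassMaintaining {ι ρ : Type*} [DecidableEq ι] [Fintype ρ]
    (re : ρ → Multiset ι × Multiset ι) (C : Set ι) : Prop :=
  ∃ v : ρ → ℝ,
    (∀ r : ρ, (∀ a ∈ (re r).1, a ∈ C) → 0 < v r) ∧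
    (∀ r : ρ, ¬ (∀ a ∈ (re r).1, a ∈ C) → v r = 0) ∧
    (∀ i ∈ C, 0 ≤ ∑ r : ρ, stoich re i r * v r)

/-- An organization is closed and mass-maintaining. -/
def Organization {ι ρ : Type*} [DecidableEq ι] [Fintype ρ]
    (re : ρ → Multiset ι × Multiset ι) (O : Set ι) : Prop :=
  Closed re O ∧ MassMaintaining re O

/-- The closure of `S`: the smallest closed set containing `S`. -/
def GCL {ι ρ : Type*} (re : ρ → Multiset ι × Multiset ι) (S : Set ι) : Set ι :=
  ⋂₀ {C : Set ι | Closed re C ∧ S ⊆ C}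

/-- A catalytic flow system: every molecule has a dilution reaction `{k} → ∅`,
and no molecule is used-up by any other reaction. -/
def CatalyticFlow {ι ρ : Type*} [DecidableEq ι] (re : ρ → Multiset ι × Multiset ι) : Prop :=
  (∀ k : ι, ∃ r : ρ, re r = ({k}, (0 : Multiset ι))) ∧
  (∀ r : ρ, (¬ ∃ k : ι, re r = ({k}, (0 : Multiset ι))) →
    ∀ k : ι, (re r).1.count k ≤ (re r).2.count k)

/-- A consistent reaction system with persistent molecules `P`. -/
def Consistent {ι ρ : Type*} [DecidableEq ι] (re : ρ → Multiset ι × Multiset ι)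
    (P : Set ι) : Prop :=
  (∀ k : ι, k ∉ P → ∃ r : ρ, (re r).1 = {k} ∧ k ∉ (re r).2) ∧
  (∀ r : ρ, ∀ p ∈ P, (re r).1.count p ≤ (re r).2.count p)

/-- `S` is the largest self-maintaining subset of `C`. -/
def IsGSM {ι ρ : Type*} [DecidableEq ι] (re : ρ → Multiset ι × Multiset ι)
    (C S : Set ι) : Prop :=
  S ⊆ C ∧ SelfMaintaining re S ∧ ∀ T : Set ι, T ⊆ C → SelfMaintaining re T → T ⊆ S

/-- `S` is the largest mass-maintaining subset of `C`. -/
def IsGMM {ι ρ : Type*} [DecidableEq ι] [Fintype ρ] (re : ρ → Multiset ι × Multiset ι)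
    (C S : Set ι) : Prop :=
  S ⊆ C ∧ MassMaintaining re S ∧ ∀ T : Set ι, T ⊆ C → MassMaintaining re T → T ⊆ S

/-- An admissible flux function w.r.t. threshold `Φ`: nonnegative, and positive
exactly when all reactants are present (above threshold). -/
def Admissible {ι ρ : Type*} (re : ρ → Multiset ι × Multiset ι) (Φ : ℝ)
    (v : (ι → ℝ) → ρ → ℝ) : Prop :=
  ∀ x : ι → ℝ, ∀ r : ρ, 0 ≤ v x r ∧ (0 < v x r ↔ ∀ a ∈ (re r).1, x a > Φ)

/-- in a catalytic flow system, every semi-organization (closed and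
self-maintaining set) is mass-maintaining, hence an organization. -/
theorem stmt3 {ι ρ : Type*} [Fintype ι] [Fintype ρ] [DecidableEq ι]
    (re : ρ → Multiset ι × Multiset ι) (h : CatalyticFlow re)
    (O : Set ι) (hO : SemiOrganization re O) :
    MassMaintaining re O ∧ Organization re O := by
  classical
  obtain ⟨hdil, hcat⟩ := h
  obtain ⟨hclosed, hsm⟩ := hO
  set n : ℕ := Fintype.card ρ with hn
  set ε : ℝ := 1 / (n + 1) with hεdef
  have hεpos : 0 < ε := by positivity
  have hεle : (n : ℝ) * ε < 1 := by
    rw [hεdef]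
    rw [mul_one_div, div_lt_one (by positivity)]
    linarith
  set v : ρ → ℝ := fun r =>
    if (∀ a ∈ (re r).1, a ∈ O) then
      (if ∃ k, re r = ({k}, (0 : Multiset ι)) then ε else 1) else 0 with hv
  have hMM : MassMaintaining re O := by
    refine ⟨v, ?_, ?_, ?_⟩
    · intro r hr
      simp only [hv, if_pos hr]
      split
      · exact hεpos
      · norm_num
    · intro r hr
      simp only [hv, if_neg hr]
    · intro i hi
      obtain ⟨rd, hrd⟩ := hdil i
      have hused : UsedUp re O i := by
        refine ⟨rd, ?_, ?_⟩
        · intro a ha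
          rw [hrd] at ha
          simp only [Multiset.mem_singleton] at ha
          rwa [ha]
        · simp [hrd]
      obtain ⟨r₀, hr₀O, hr₀⟩ := hsm i hi hused
      have key : ∀ r : ρ, (if r = r₀ then (1 : ℝ) else -ε) ≤ stoich re i r * v r := by
        intro r
        by_cases hrr : r = r₀
        · subst hrr
          rw [if_pos rfl]
          have hnd : ¬ ∃ k, re r = ({k}, (0 : Multiset ι)) := by
            rintro ⟨k, hk⟩
            rw [hk] at hr₀
            simp at hr₀
          simp only [hv, if_pos hr₀O, if_neg hnd, mul_one]
          have : ((re r).1.count i : ℝ) + 1 ≤ ((re r).2.count i : ℝ) := by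
            exact_mod_cast hr₀
          simp only [stoich]
          linarith
        · rw [if_neg hrr]
          by_cases hen : ∀ a ∈ (re r).1, a ∈ O
          · by_cases hd : ∃ k, re r = ({k}, (0 : Multiset ι))
            · simp only [hv, if_pos hen, if_pos hd]
              obtain ⟨k, hk⟩ := hd
              have hst : (-1 : ℝ) ≤ stoich re i r := by
                simp only [stoich, hk]
                have hc : (({k} : Multiset ι).count i : ℝ) ≤ 1 := by
                  by_cases hik : i = k <;> simp [hik]
                simp only [Multiset.count_zero, Nat.cast_zero, zero_sub]
                linarith
              nlinarith [hεpos.le]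
            · simp only [hv, if_pos hen, if_neg hd, mul_one]
              have hst : (0 : ℝ) ≤ stoich re i r := by
                have := hcat r hd i
                simp only [stoich]
                have : ((re r).1.count i : ℝ) ≤ ((re r).2.count i : ℝ) := by
                  exact_mod_cast this
                linarith
              linarith
          · simp only [hv, if_neg hen, mul_zero]
            linarith
      have hsum : ∑ r : ρ, (if r = r₀ then (1 : ℝ) else -ε) ≤
          ∑ r : ρ, stoich re i r * v r :=
        Finset.sum_le_sum fun r _ => key r
      have hval : ∑ r : ρ, (if r = r₀ then (1 : ℝ) else -ε) =
          (1 + ε) - (n : ℝ) * ε := by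
        have : ∀ r : ρ, (if r = r₀ then (1 : ℝ) else -ε) =
            (if r = r₀ then (1 + ε : ℝ) else 0) + (-ε) := by
          intro r; by_cases hrr : r = r₀ <;> simp [hrr]
        rw [Finset.sum_congr rfl fun r _ => this r, Finset.sum_add_distrib]
        simp [hn, Finset.card_univ, mul_comm]
        ring
      rw [hval] at hsum
      linarith
  exact ⟨hMM, hclosed, hMM⟩
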